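/- The row sums of R satisfy R.mulVec 1 = (A + R).mulVec b (where 1 is the all-ones vector), and with r := max_i ∑_j K i j one has max_i ∑_j R i j ≤ (1 − min_j b_j) · r / (1 − r); consequently every complex eigenvalue μ of R satisfies |μ| ≤ (1 − min_j b_j) · r / (1 − r). -/

import Mathlib

open Matrix Finset

/-- The row sums of `R` satisfy `R.mulVec 1 = (A + R).mulVec b`
(where `1` is the all-ones vector), and with `r := max_i ∑_j K i j` one has
`max_i ∑_j R i j ≤ (1 − min_j b_j) · r / (1 − r)`; consequently every complex
eigenvalue `μ` of `R` satisfies `|μ| ≤ (1 − min_j b_j) · r / (1 − r)`. -/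
theorem stmt_9 (n : ℕ) (hn : 1 ≤ n)
    (hne : (Finset.univ : Finset (Fin n)).Nonempty)
    (F : Matrix (Fin n) (Fin n) ℝ)
    (hFnonneg : ∀ i j, 0 ≤ F i j)
    (hFrow : ∀ i, ∑ j, F i j = 1)
    (b : Fin n → ℝ) (hb0 : ∀ j, 0 ≤ b j) (hb1 : ∀ j, b j < 1)
    (K : Matrix (Fin n) (Fin n) ℝ)
    (hK : ∀ i j, K i j = F i j * b j)
    (hInv : IsUnit (1 - K))
    (S : Matrix (Fin n) (Fin n) ℝ)
    (hS : S = (1 - K)⁻¹ * F)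
    (A R : Matrix (Fin n) (Fin n) ℝ)
    (hA : ∀ i j, A i j = (1 - b i) * S i j * (1 - b j))
    (hR : ∀ i j, R i j = (1 - b i) * S i j * b j)
    (r : ℝ) (hr : r = Finset.univ.sup' hne (fun i => ∑ j, K i j)) :
    R.mulVec (fun _ => 1) = (A + R).mulVec b ∧
    Finset.univ.sup' hne (fun i => ∑ j, R i j) ≤
      (1 - Finset.univ.inf' hne b) * r / (1 - r) ∧
    (∀ μ : ℂ, μ ∈ spectrum ℂ (R.map Complex.ofReal) →
        ‖μ‖ ≤ (1 - Finset.univ.inf' hne b) * r / (1 - r)) := by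
  classical
  -- basic facts about K
  have hKnn : ∀ i j, 0 ≤ K i j := fun i j => by
    rw [hK]; exact mul_nonneg (hFnonneg i j) (hb0 j)
  have hKrow : ∀ i, ∑ j, K i j < 1 := by
    intro i
    have hB : ∀ j, b j ≤ Finset.univ.sup' hne b := fun j => Finset.le_sup' b (mem_univ j)
    have hB1 : Finset.univ.sup' hne b < 1 := (Finset.sup'_lt_iff hne).mpr fun j _ => hb1 j
    calc ∑ j, K i j ≤ ∑ j, F i j * Finset.univ.sup' hne b := by
          refine Finset.sum_le_sum fun j _ => ?_
          rw [hK]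
          exact mul_le_mul_of_nonneg_left (hB j) (hFnonneg i j)
      _ = Finset.univ.sup' hne b := by rw [← Finset.sum_mul, hFrow, one_mul]
      _ < 1 := hB1
  have hdet : IsUnit (1 - K).det := (Matrix.isUnit_iff_isUnit_det _).mp hInv
  have hmul : (1 - K) * (1 - K)⁻¹ = 1 := Matrix.mul_nonsing_inv _ hdet
  -- entrywise formula for (1-K) * M
  have hrowform : ∀ (M : Matrix (Fin n) (Fin n) ℝ) i j,
      ((1 - K) * M) i j = M i j - ∑ k, K i k * M k j := by
    intro M i j
    rw [Matrix.mul_apply]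
    have : ∀ k, (1 - K) i k * M k j
        = (if i = k then M k j else 0) - K i k * M k j := by
      intro k
      simp only [Matrix.sub_apply, Matrix.one_apply]
      split <;> ring
    rw [Finset.sum_congr rfl fun k _ => this k, Finset.sum_sub_distrib,
      Finset.sum_ite_eq univ i (fun k => M k j)]
    simp
  -- nonnegativity of (1-K)⁻¹
  have hN : ∀ j i, 0 ≤ (1 - K)⁻¹ i j := by
    intro j
    obtain ⟨i, -, hi⟩ := Finset.exists_mem_eq_inf' hne (fun i => (1 - K)⁻¹ i j)
    have hmin : ∀ k, (1 - K)⁻¹ i j ≤ (1 - K)⁻¹ k j := by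
      intro k
      rw [← hi]
      exact Finset.inf'_le _ (mem_univ k)
    suffices h0 : 0 ≤ (1 - K)⁻¹ i j by intro k; exact h0.trans (hmin k)
    by_contra h0
    push_neg at h0
    have heq : (1 - K)⁻¹ i j - ∑ k, K i k * (1 - K)⁻¹ k j = (1 : Matrix (Fin n) (Fin n) ℝ) i j := by
      rw [← hrowform, hmul]
    have hge : ∑ k, K i k * (1 - K)⁻¹ i j ≤ ∑ k, K i k * (1 - K)⁻¹ k j :=
      Finset.sum_le_sum fun k _ => mul_le_mul_of_nonneg_left (hmin k) (hKnn i k)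
    have hone : 0 ≤ (1 : Matrix (Fin n) (Fin n) ℝ) i j := by
      rw [Matrix.one_apply]; split <;> norm_num
    have hsum : ∑ k, K i k * (1 - K)⁻¹ i j = (∑ k, K i k) * (1 - K)⁻¹ i j := by
      rw [Finset.sum_mul]
    have hKr := hKrow i
    have hKr0 : 0 ≤ ∑ k, K i k := Finset.sum_nonneg fun k _ => hKnn i k
    nlinarith [hge, heq, hone]
  -- nonnegativity of S
  have hSnn : ∀ i j, 0 ≤ S i j := by
    intro i j
    rw [hS, Matrix.mul_apply]
    exact Finset.sum_nonneg fun k _ => mul_nonneg (hN k i) (hFnonneg k j)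
  -- S = K * S + F entrywise
  have hSid : ∀ i j, S i j - ∑ k, K i k * S k j = F i j := by
    intro i j
    rw [← hrowform, hS, ← Matrix.mul_assoc, hmul, Matrix.one_mul]
  -- row sums of S weighted by b
  set w : Fin n → ℝ := fun i => ∑ j, S i j * b j with hw
  have hw_nonneg : ∀ i, 0 ≤ w i :=
    fun i => Finset.sum_nonneg fun j _ => mul_nonneg (hSnn i j) (hb0 j)
  have hw_eq : ∀ i, w i = ∑ k, K i k * w k + ∑ j, K i j := by
    intro i
    have : ∀ j, S i j * b j = (∑ k, K i k * S k j) * b j + F i j * b j := by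
      intro j
      rw [← hSid i j]
      ring
    calc w i = ∑ j, ((∑ k, K i k * S k j) * b j + F i j * b j) :=
          Finset.sum_congr rfl fun j _ => this j
      _ = ∑ j, ∑ k, K i k * (S k j * b j) + ∑ j, F i j * b j := by
          rw [Finset.sum_add_distrib]
          congr 1
          refine Finset.sum_congr rfl fun j _ => ?_
          rw [Finset.sum_mul]
          exact Finset.sum_congr rfl fun k _ => by ring
      _ = ∑ k, K i k * w k + ∑ j, K i j := by
          rw [Finset.sum_comm]
          congr 1
          · exact Finset.sum_congr rfl fun k _ => by rw [hw, Finset.mul_sum]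
          · exact Finset.sum_congr rfl fun j _ => (hK i j).symm
  have hr0 : 0 ≤ r := by
    obtain ⟨i, hi⟩ := hne
    rw [hr]
    exact le_trans (Finset.sum_nonneg fun k _ => hKnn i k)
      (Finset.le_sup' (fun i => ∑ j, K i j) hi)
  have hr1 : r < 1 := by
    rw [hr]
    exact (Finset.sup'_lt_iff hne).mpr fun i _ => hKrow i
  have hrle : ∀ i, ∑ j, K i j ≤ r := by
    intro i; rw [hr]; exact Finset.le_sup' (fun i => ∑ j, K i j) (mem_univ i)
  have hw_le : ∀ i, w i ≤ r / (1 - r) := by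
    obtain ⟨i, -, hi⟩ := Finset.exists_mem_eq_sup' hne w
    have hmax : ∀ k, w k ≤ w i := by
      intro k; rw [← hi]; exact Finset.le_sup' w (mem_univ k)
    have hMle : w i ≤ r / (1 - r) := by
      have h1 : w i ≤ (∑ k, K i k) * w i + ∑ k, K i k := by
        have hs : ∑ k, K i k * w k ≤ (∑ k, K i k) * w i := by
          rw [Finset.sum_mul]
          exact Finset.sum_le_sum fun k _ => mul_le_mul_of_nonneg_left (hmax k) (hKnn i k)
        calc w i = ∑ k, K i k * w k + ∑ k, K i k := hw_eq i
          _ ≤ (∑ k, K i k) * w i + ∑ k, K i k := by linarith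
      have h2 : w i ≤ r * w i + r := by
        have := hrle i
        have := hw_nonneg i
        nlinarith [mul_le_mul_of_nonneg_right (hrle i) (hw_nonneg i)]
      rw [le_div_iff₀ (by linarith : (0:ℝ) < 1 - r)]
      nlinarith
    intro j
    exact (hmax j).trans hMle
  -- key row sum bound
  have hRsum : ∀ i, ∑ j, R i j = (1 - b i) * w i := by
    intro i
    rw [hw, Finset.mul_sum]
    exact Finset.sum_congr rfl fun j _ => by rw [hR]; ring
  have hinfb_lt : Finset.univ.inf' hne b < 1 := by
    obtain ⟨i, hi⟩ := hne
    exact lt_of_le_of_lt (Finset.inf'_le b hi) (hb1 i)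
  have hbound : ∀ i, ∑ j, R i j ≤ (1 - Finset.univ.inf' hne b) * r / (1 - r) := by
    intro i
    rw [hRsum i, mul_div_assoc]
    have h1 : 1 - b i ≤ 1 - Finset.univ.inf' hne b := by
      have := Finset.inf'_le b (mem_univ i)
      linarith
    exact mul_le_mul h1 (hw_le i) (hw_nonneg i) (by linarith)
  have hpart2 : Finset.univ.sup' hne (fun i => ∑ j, R i j) ≤
      (1 - Finset.univ.inf' hne b) * r / (1 - r) :=
    Finset.sup'_le hne _ fun i _ => hbound i
  refine ⟨?_, hpart2, ?_⟩
  · -- Part 1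
    funext i
    simp only [Matrix.mulVec, dotProduct, Matrix.add_apply]
    refine Finset.sum_congr rfl fun j _ => ?_
    rw [hR, hA]
    ring
  · -- Part 3
    intro μ hμ
    have hRnn : ∀ i j, 0 ≤ R i j := by
      intro i j
      rw [hR]
      have := hb1 i
      exact mul_nonneg (mul_nonneg (by linarith) (hSnn i j)) (hb0 j)
    set Rc : Matrix (Fin n) (Fin n) ℂ := R.map Complex.ofReal with hRc
    have hspec : μ ∈ spectrum ℂ (Matrix.toLin' Rc) := by
      have : Matrix.toLin' Rc = Matrix.toLinAlgEquiv' Rc := by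
        apply LinearMap.ext
        intro v
        simp [Matrix.toLin'_apply]
      rw [this, AlgEquiv.spectrum_eq]
      exact hμ
    have heig : Module.End.HasEigenvalue (Matrix.toLin' Rc) μ :=
      Module.End.hasEigenvalue_iff_mem_spectrum.mpr hspec
    obtain ⟨k, hk⟩ := eigenvalue_mem_ball heig
    rw [Metric.mem_closedBall] at hk
    have hdist : ‖μ - Rc k k‖ ≤ ∑ j ∈ Finset.univ.erase k, ‖Rc k j‖ := by
      rwa [Complex.dist_eq] at hk
    have hentry : ∀ j, ‖Rc k j‖ = R k j := by
      intro j
      rw [hRc, Matrix.map_apply, Complex.norm_real, Real.norm_eq_abs, abs_of_nonneg (hRnn k j)]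
    have habs : ‖μ‖ ≤ ∑ j, R k j := by
      have h1 : ‖μ‖ ≤ ‖μ - Rc k k‖ + ‖Rc k k‖ := by
        calc ‖μ‖ = ‖μ - Rc k k + Rc k k‖ := by ring_nf
          _ ≤ _ := norm_add_le _ _
      have h2 : ‖Rc k k‖ = R k k := by
        exact hentry k
      have h3 : ∑ j ∈ Finset.univ.erase k, ‖Rc k j‖ = ∑ j ∈ Finset.univ.erase k, R k j :=
        Finset.sum_congr rfl fun j _ => hentry j
      have h4 : ∑ j ∈ Finset.univ.erase k, R k j + R k k = ∑ j, R k j :=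
        Finset.sum_erase_add _ _ (mem_univ k)
      rw [h2] at h1
      rw [h3] at hdist
      linarith
    exact habs.trans ((Finset.le_sup' (fun i => ∑ j, R i j) (mem_univ k)).trans hpart2)
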